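/- Homogenized membrane energy (solution of the through-thickness optimization): let μ > 0, μ_c > 0 and λ ∈ ℝ with 2μ + λ > 0, and define W(X) = μ‖sym X‖² + μ_c‖skew X‖² + (λ/2)·(tr X)². Let n ∈ ℝ³ with ‖n‖ = 1 and let E be a real 3×3 matrix with E n = 0, and set v* = −((μ − μ_c)/(μ + μ_c))·Eᵀn − (λ/(2μ + λ))·tr(E)·n. Then W(E + v*⊗n) = μ‖sym E∥‖² + μ_c‖skew E∥‖² + (λμ/(λ + 2μ))·(tr E)² + (2μμ_c/(μ + μ_c))·‖Eᵀn‖², and W(E + v⊗n) ≥ W(E + v*⊗n) for every v ∈ ℝ³; hence this expression equals the infimum of W(E + v⊗n) over v ∈ ℝ³. -/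

import Mathlib

open Matrix
set_option maxHeartbeats 2000000
set_option linter.all false

noncomputable section

/-- Squared Frobenius norm `‖X‖² = tr (X Xᵀ)`. -/
def normSq (X : Matrix (Fin 3) (Fin 3) ℝ) : ℝ := Matrix.trace (X * Xᵀ)

/-- Squared Euclidean norm on ℝ³. -/
def vnormSq (v : Fin 3 → ℝ) : ℝ := ∑ i, v i ^ 2

/-- Symmetric part. -/
def sym3 (X : Matrix (Fin 3) (Fin 3) ℝ) : Matrix (Fin 3) (Fin 3) ℝ := ((1 : ℝ)/2) • (X + Xᵀ)

/-- Skew-symmetric part. -/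
def skew3 (X : Matrix (Fin 3) (Fin 3) ℝ) : Matrix (Fin 3) (Fin 3) ℝ := ((1 : ℝ)/2) • (X - Xᵀ)

/-- Rank-one matrix `v ⊗ n = v nᵀ`. -/
def outer (v n : Fin 3 → ℝ) : Matrix (Fin 3) (Fin 3) ℝ := Matrix.vecMulVec v n

lemma G1 (M : Matrix (Fin 3) (Fin 3) ℝ) (a b : Fin 3 → ℝ) :
    normSq (sym3 (M + outer a b)) = normSq (sym3 M) + a ⬝ᵥ M.mulVec b + b ⬝ᵥ M.mulVec a
      + (vnormSq a * vnormSq b + (a ⬝ᵥ b)^2)/2 := by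
  simp only [normSq, sym3, outer, Matrix.trace, Matrix.diag, Matrix.mul_apply,
    Matrix.add_apply, Matrix.smul_apply, Matrix.transpose_apply, Matrix.vecMulVec_apply,
    Matrix.mulVec, dotProduct, vnormSq, Fin.sum_univ_three, smul_eq_mul]
  ring

lemma G2 (M : Matrix (Fin 3) (Fin 3) ℝ) (a b : Fin 3 → ℝ) :
    normSq (skew3 (M + outer a b)) = normSq (skew3 M) + a ⬝ᵥ M.mulVec b - b ⬝ᵥ M.mulVec a
      + (vnormSq a * vnormSq b - (a ⬝ᵥ b)^2)/2 := by
  simp only [normSq, skew3, outer, Matrix.trace, Matrix.diag, Matrix.mul_apply,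
    Matrix.add_apply, Matrix.sub_apply, Matrix.smul_apply, Matrix.transpose_apply,
    Matrix.vecMulVec_apply, Matrix.mulVec, dotProduct, vnormSq,
    Fin.sum_univ_three, smul_eq_mul]
  ring

lemma G3 (M : Matrix (Fin 3) (Fin 3) ℝ) (a b : Fin 3 → ℝ) :
    Matrix.trace (M + outer a b) = Matrix.trace M + a ⬝ᵥ b := by
  simp only [outer, Matrix.trace, Matrix.diag, Matrix.add_apply, Matrix.vecMulVec_apply,
    dotProduct, Fin.sum_univ_three]
  ring

lemma dotT (M : Matrix (Fin 3) (Fin 3) ℝ) (a b : Fin 3 → ℝ) :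
    a ⬝ᵥ Mᵀ.mulVec b = b ⬝ᵥ M.mulVec a := by
  simp only [Matrix.mulVec, dotProduct, Matrix.transpose_apply, Fin.sum_univ_three]
  ring

lemma Epar (M : Matrix (Fin 3) (Fin 3) ℝ) (n : Fin 3 → ℝ) :
    (1 - outer n n) * M = M + outer (-n) (Mᵀ.mulVec n) := by
  ext i j
  fin_cases i <;>
  simp only [outer, Matrix.sub_mul, Matrix.one_mul, Matrix.sub_apply, Matrix.add_apply,
    Matrix.mul_apply, Matrix.vecMulVec_apply, Matrix.mulVec, dotProduct,
    Matrix.transpose_apply, Pi.neg_apply, Fin.sum_univ_three, Matrix.one_apply,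
    Fin.isValue, if_true, if_false, Fin.zero_eta, Fin.mk_one, show ((0:Fin 3) ≠ 1) by decide,
    show ((0:Fin 3) ≠ 2) by decide, show ((1:Fin 3) ≠ 0) by decide, show ((1:Fin 3) ≠ 2) by decide,
    show ((2:Fin 3) ≠ 0) by decide, show ((2:Fin 3) ≠ 1) by decide] <;>
  fin_cases j <;> simp <;> ring

lemma dot_self_eq (a : Fin 3 → ℝ) : a ⬝ᵥ a = vnormSq a := by
  simp only [dotProduct, vnormSq, Fin.sum_univ_three]; ring

lemma vns_neg (a : Fin 3 → ℝ) : vnormSq (-a) = vnormSq a := by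
  simp [vnormSq]

lemma vns_add (a b : Fin 3 → ℝ) :
    vnormSq (a + b) = vnormSq a + 2*(a ⬝ᵥ b) + vnormSq b := by
  simp only [vnormSq, dotProduct, Pi.add_apply, Fin.sum_univ_three]; ring

lemma dot_lin (c d : ℝ) (x y w : Fin 3 → ℝ) :
    (fun i => c * x i + d * y i) ⬝ᵥ w = c*(x ⬝ᵥ w) + d*(y ⬝ᵥ w) := by
  simp only [dotProduct, Fin.sum_univ_three]; ring

lemma dot_lin' (c d : ℝ) (x y w : Fin 3 → ℝ) :
    w ⬝ᵥ (fun i => c * x i + d * y i) = c*(w ⬝ᵥ x) + d*(w ⬝ᵥ y) := by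
  simp only [dotProduct, Fin.sum_univ_three]; ring

lemma vns_lin (c d : ℝ) (x y : Fin 3 → ℝ) :
    vnormSq (fun i => c * x i + d * y i)
      = c^2*vnormSq x + 2*c*d*(x ⬝ᵥ y) + d^2*vnormSq y := by
  simp only [vnormSq, dotProduct, Fin.sum_univ_three]; ring

lemma cs3 (u n : Fin 3 → ℝ) : (u ⬝ᵥ n)^2 ≤ vnormSq u * vnormSq n := by
  simp only [dotProduct, vnormSq, Fin.sum_univ_three]
  nlinarith [sq_nonneg (u 0*n 1 - u 1*n 0), sq_nonneg (u 0*n 2 - u 2*n 0),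
    sq_nonneg (u 1*n 2 - u 2*n 1)]

/-- The physically linear Cosserat strain energy. -/
def Wmp (μ μc lam : ℝ) (X : Matrix (Fin 3) (Fin 3) ℝ) : ℝ :=
  μ * normSq (sym3 X) + μc * normSq (skew3 X) + (lam/2) * (Matrix.trace X)^2

/-- The optimal through-thickness stretch direction. -/
def vstar (μ μc lam : ℝ) (n : Fin 3 → ℝ) (E : Matrix (Fin 3) (Fin 3) ℝ) : Fin 3 → ℝ :=
  fun i => -((μ - μc)/(μ + μc)) * (Eᵀ.mulVec n) i - (lam/(2*μ + lam)) * Matrix.trace E * n i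

theorem homogenized_membrane_energy (μ μc lam : ℝ)
    (hμ : 0 < μ) (hμc : 0 < μc) (hlam : 0 < 2*μ + lam)
    (n : Fin 3 → ℝ) (hn : vnormSq n = 1)
    (E : Matrix (Fin 3) (Fin 3) ℝ) (hE : E.mulVec n = 0) :
    Wmp μ μc lam (E + outer (vstar μ μc lam n E) n)
      = μ * normSq (sym3 ((1 - outer n n) * E)) + μc * normSq (skew3 ((1 - outer n n) * E))
        + (lam * μ/(lam + 2*μ)) * (Matrix.trace E)^2
        + (2*μ*μc/(μ + μc)) * vnormSq (Eᵀ.mulVec n) ∧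
    (∀ v : Fin 3 → ℝ,
      Wmp μ μc lam (E + outer v n) ≥ Wmp μ μc lam (E + outer (vstar μ μc lam n E) n)) ∧
    (⨅ v : Fin 3 → ℝ, Wmp μ μc lam (E + outer v n))
      = Wmp μ μc lam (E + outer (vstar μ μc lam n E) n) := by
  have ha : μ + μc ≠ 0 := by positivity
  have hb : 2*μ + lam ≠ 0 := ne_of_gt hlam
  have hb' : lam + 2*μ ≠ 0 := by intro h; apply hb; linarith
  set m : Fin 3 → ℝ := Eᵀ.mulVec n with hm
  set t : ℝ := Matrix.trace E with ht
  have hdE : ∀ w : Fin 3 → ℝ, w ⬝ᵥ E.mulVec n = 0 := fun w => by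
    rw [hE, dotProduct_zero]
  have hnm : n ⬝ᵥ m = 0 := by rw [hm, dotT]; exact hdE n
  have hmn : m ⬝ᵥ n = 0 := by rw [dotProduct_comm]; exact hnm
  have hnEw : ∀ w : Fin 3 → ℝ, n ⬝ᵥ E.mulVec w = m ⬝ᵥ w := fun w => by
    have h := dotT Eᵀ n w
    rw [Matrix.transpose_transpose] at h
    rw [h, ← hm, dotProduct_comm]
  have hnEm : n ⬝ᵥ E.mulVec m = vnormSq m := by rw [hnEw m, dot_self_eq]
  have Wkey : ∀ v : Fin 3 → ℝ, Wmp μ μc lam (E + outer v n)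
      = μ * normSq (sym3 E) + μc * normSq (skew3 E) + (lam/2)*t^2
        + (μ-μc)*(m ⬝ᵥ v) + ((μ+μc)/2)*(vnormSq v)
        + ((μ-μc+lam)/2)*(v ⬝ᵥ n)^2 + lam*t*(v ⬝ᵥ n) := by
    intro v
    simp only [Wmp]
    rw [G1, G2, G3, hdE v, hnEw v, hn, ← ht]
    ring
  have S1 : normSq (sym3 ((1 - outer n n) * E)) = normSq (sym3 E) - vnormSq m / 2 := by
    rw [Epar, ← hm, G1]
    rw [neg_dotProduct, Matrix.mulVec_neg, dotProduct_neg, hnEm, hdE m,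
      vns_neg, neg_dotProduct, hnm, hn]
    ring
  have S2 : normSq (skew3 ((1 - outer n n) * E)) = normSq (skew3 E) - vnormSq m / 2 := by
    rw [Epar, ← hm, G2]
    rw [neg_dotProduct, Matrix.mulVec_neg, dotProduct_neg, hnEm, hdE m,
      vns_neg, neg_dotProduct, hnm, hn]
    ring
  have hvs : vstar μ μc lam n E
      = fun i => (-((μ-μc)/(μ+μc))) * m i + (-(lam/(2*μ+lam))*t) * n i := by
    funext i
    simp only [vstar, ← hm, ← ht]
    ring
  have hp : m ⬝ᵥ vstar μ μc lam n E = -((μ-μc)/(μ+μc)) * vnormSq m := by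
    rw [hvs, dot_lin', dot_self_eq, hmn]; ring
  have hξ : vstar μ μc lam n E ⬝ᵥ n = -(lam/(2*μ+lam))*t := by
    rw [hvs, dot_lin, hmn, dot_self_eq, hn]; ring
  have hV : vnormSq (vstar μ μc lam n E)
      = ((μ-μc)/(μ+μc))^2 * vnormSq m + (lam/(2*μ+lam))^2*t^2 := by
    rw [hvs, vns_lin, hmn, hn]; ring
  have part1 : Wmp μ μc lam (E + outer (vstar μ μc lam n E) n)
      = μ * normSq (sym3 ((1 - outer n n) * E)) + μc * normSq (skew3 ((1 - outer n n) * E))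
        + (lam * μ/(lam + 2*μ)) * t^2 + (2*μ*μc/(μ + μc)) * vnormSq m := by
    rw [Wkey _, S1, S2, hp, hξ, hV]
    rw [show lam + 2*μ = 2*μ+lam by ring]
    generalize hd : 2*μ+lam = d at hb ⊢
    field_simp
    subst hd
    ring
  have diff : ∀ u : Fin 3 → ℝ, Wmp μ μc lam (E + outer (u + vstar μ μc lam n E) n)
      = Wmp μ μc lam (E + outer (vstar μ μc lam n E) n)
        + ((μ+μc)/2)*(vnormSq u - (u ⬝ᵥ n)^2) + ((2*μ+lam)/2)*(u ⬝ᵥ n)^2 := by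
    intro u
    rw [Wkey (u + vstar μ μc lam n E), Wkey (vstar μ μc lam n E),
      vns_add, dotProduct_add, add_dotProduct, hp, hξ, hV]
    rw [hvs, dot_lin', dotProduct_comm m u]
    have hA : (μ+μc)*((μ-μc)/(μ+μc)) = μ-μc := by field_simp
    have hB : (2*μ+lam)*(lam/(2*μ+lam)) = lam := by field_simp
    linear_combination (-(u ⬝ᵥ m))*hA + (-(t*(u ⬝ᵥ n)))*hB
  have part2 : ∀ v : Fin 3 → ℝ,
      Wmp μ μc lam (E + outer v n) ≥ Wmp μ μc lam (E + outer (vstar μ μc lam n E) n) := by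
    intro v
    have h := diff (v - vstar μ μc lam n E)
    rw [sub_add_cancel] at h
    rw [h]
    have hcs := cs3 (v - vstar μ μc lam n E) n
    rw [hn, mul_one] at hcs
    nlinarith [sq_nonneg ((v - vstar μ μc lam n E) ⬝ᵥ n)]
  refine ⟨part1, part2, ?_⟩
  apply le_antisymm
  · exact ciInf_le ⟨Wmp μ μc lam (E + outer (vstar μ μc lam n E) n),
      by rintro x ⟨v, rfl⟩; exact part2 v⟩ _
  · exact le_ciInf part2


end
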